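/- Let a > 0, b > 0, Te ∈ ℝ, Tc > Te, T_δ := Tc − Te, D > 0, and E ≥ 0. Suppose T : [0,D] → ℝ is differentiable with T'(t) = a·(E/D) − b·(T(t) − Te) on [0,D] and T(0) = Te (constant power policy P ≡ E/D). Then T(t) ≤ Tc for all t ∈ [0,D] if and only if E ≤ (T_δ·b/a) · (D e^{bD})/(e^{bD} − 1). -/

import Mathlib

open MeasureTheory Real Set

theorem stmt_18 (a b Te Tc D E : ℝ) (ha : 0 < a) (hb : 0 < b) (hTc : Te < Tc)
    (hD : 0 < D) (hE : 0 ≤ E)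
    (T : ℝ → ℝ)
    (hT : ∀ t ∈ Set.Icc (0:ℝ) D, HasDerivAt T (a * (E / D) - b * (T t - Te)) t)
    (h0 : T 0 = Te) :
    (∀ t ∈ Set.Icc (0:ℝ) D, T t ≤ Tc) ↔
      E ≤ ((Tc - Te) * b / a) * (D * Real.exp (b * D)) / (Real.exp (b * D) - 1) := by
  set c : ℝ := a * E / (b * D) with hc
  have hc0 : 0 ≤ c := by positivity
  -- g t = (T t - Te - c) * exp (b t) is constant on [0,D]
  set g : ℝ → ℝ := fun t => (T t - Te - c) * Real.exp (b * t) with hg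
  have hgderiv : ∀ x ∈ Set.Ico (0:ℝ) D, HasDerivWithinAt g 0 (Set.Ici x) x := by
    intro x hx
    have hx' : x ∈ Set.Icc (0:ℝ) D := ⟨hx.1, le_of_lt hx.2⟩
    have hT' := hT x hx'
    have hexp : HasDerivAt (fun t => Real.exp (b * t)) (b * Real.exp (b * x)) x := by
      have := (Real.hasDerivAt_exp (b * x)).comp x ((hasDerivAt_id x).const_mul b)
      exact this.congr_deriv (by ring)
    have h1 : HasDerivAt (fun t => T t - Te - c) (a * (E / D) - b * (T x - Te)) x := by
      simpa using (hT'.sub_const Te).sub_const c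
    have h2 := h1.mul hexp
    have hkey : (a * (E / D) - b * (T x - Te)) * Real.exp (b * x)
        + (T x - Te - c) * (b * Real.exp (b * x)) = 0 := by
      have : a * (E / D) = b * c := by
        rw [hc]
        field_simp
      nlinarith [Real.exp_pos (b * x), this]
    have : HasDerivAt g 0 x := by
      rw [← hkey]; exact h2
    exact this.hasDerivWithinAt
  have hgcont : ContinuousOn g (Set.Icc 0 D) := by
    apply ContinuousOn.mul
    · intro x hx
      exact (((hT x hx).continuousAt).continuousWithinAt.sub continuousWithinAt_const).sub
        continuousWithinAt_const
    · exact (Real.continuous_exp.comp (continuous_const.mul continuous_id)).continuousOn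
  have hgconst : ∀ x ∈ Set.Icc (0:ℝ) D, g x = g 0 :=
    fun x hx => constant_of_has_deriv_right_zero hgcont hgderiv x hx
  have hTform : ∀ x ∈ Set.Icc (0:ℝ) D, T x = Te + c * (1 - Real.exp (-(b * x))) := by
    intro x hx
    have h := hgconst x hx
    simp only [hg, h0, mul_zero, Real.exp_zero, mul_one] at h
    have hepos : (0:ℝ) < Real.exp (b * x) := Real.exp_pos _
    have : T x - Te - c = -c * Real.exp (-(b * x)) := by
      rw [Real.exp_neg]
      field_simp
      linarith [h]
    rw [Real.exp_neg] at this ⊢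
    linarith [this]
  have hs : (1:ℝ) < Real.exp (b * D) := by
    calc (1:ℝ) = Real.exp 0 := Real.exp_zero.symm
      _ < Real.exp (b * D) := Real.exp_lt_exp.mpr (by positivity)
  have hs1 : (0:ℝ) < Real.exp (b * D) - 1 := by linarith
  have hsp : (0:ℝ) < Real.exp (b * D) := Real.exp_pos _
  -- the key equivalence: T D ≤ Tc ↔ E ≤ bound
  have hkey : Te + c * (1 - Real.exp (-(b * D))) ≤ Tc ↔
      E ≤ ((Tc - Te) * b / a) * (D * Real.exp (b * D)) / (Real.exp (b * D) - 1) := by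
    rw [Real.exp_neg]
    constructor
    · intro h
      rw [hc] at h
      rw [le_div_iff₀ hs1, div_mul_eq_mul_div, le_div_iff₀ ha]
      have h' : a * E / (b * D) * (1 - (Real.exp (b * D))⁻¹) ≤ Tc - Te := by linarith
      have h2 : a * E * (Real.exp (b * D) - 1) ≤ (Tc - Te) * (b * D) * Real.exp (b * D) := by
        have e1 : a * E / (b * D) * (1 - (Real.exp (b * D))⁻¹) * (b * D * Real.exp (b * D))
            = a * E * (Real.exp (b * D) - 1) := by
          field_simp
        nlinarith [mul_le_mul_of_nonneg_right h' (by positivity : (0:ℝ) ≤ b * D * Real.exp (b * D))]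
      nlinarith [h2]
    · intro h
      have h1 : E * (Real.exp (b * D) - 1) ≤ (Tc - Te) * b / a * (D * Real.exp (b * D)) :=
        (le_div_iff₀ hs1).mp h
      have h2 : E * (Real.exp (b * D) - 1) * a ≤ (Tc - Te) * b * (D * Real.exp (b * D)) := by
        have h1' := mul_le_mul_of_nonneg_right h1 ha.le
        have e : (Tc - Te) * b / a * (D * Real.exp (b * D)) * a
            = (Tc - Te) * b * (D * Real.exp (b * D)) := by field_simp
        linarith [e ▸ h1']
      have h3 : a * E / (b * D) * (1 - (Real.exp (b * D))⁻¹) ≤ Tc - Te := by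
        rw [div_mul_eq_mul_div, div_le_iff₀ (by positivity : (0:ℝ) < b * D)]
        have e1 : a * E * (1 - (Real.exp (b * D))⁻¹) * Real.exp (b * D)
            = a * E * (Real.exp (b * D) - 1) := by
          field_simp
        nlinarith [hsp, h2]
      rw [hc]; linarith
  constructor
  · intro hAll
    have hD' : D ∈ Set.Icc (0:ℝ) D := ⟨le_of_lt hD, le_refl D⟩
    have := hAll D hD'
    rw [hTform D hD'] at this
    exact hkey.mp this
  · intro hbound t ht
    rw [hTform t ht]
    have hmono : Real.exp (-(b * D)) ≤ Real.exp (-(b * t)) := by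
      apply Real.exp_le_exp.mpr
      have := ht.2
      nlinarith
    have : c * (1 - Real.exp (-(b * t))) ≤ c * (1 - Real.exp (-(b * D))) := by
      apply mul_le_mul_of_nonneg_left (by linarith) hc0
    linarith [hkey.mpr hbound]
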